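/- arXiv:1908.10557 — 2 statements merged into one kernel-verified Lean document; each statement's English description precedes it below -/
import Mathlib

section
/- Let W be the value function and {a_i*} the unique solution of the negative discount dynamic program with ℓ = c, β = 1 + τ and x̂ = 1. If the price function is p = W and the task allocation is v_i = a_i* for all i ≥ 0, then (p, {v_i}) is an equilibrium for the production chain: (1) p(0) = 0; (2) p(s) − c(s − t) − (1+τ)·p(t) ≤ 0 for all 0 ≤ t ≤ s ≤ 1; and (3) with b_0 = 1 and b_{i+1} = b_i − v_i, the profit π_i = p(b_i) − c(v_i) − (1+τ)·p(b_{i+1}) equals 0 for all i ≥ 0. -/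
open Set Filter ENNReal

/-- Total discounted cost `∑_{i=0}^∞ (1+τ)^i c(a_i)` of a task allocation, valued in `ℝ≥0∞`
(divergent sums are `∞`; the costs `c(a_i)` are nonnegative for feasible allocations). -/
noncomputable def totalCost (τ : ℝ) (c : ℝ → ℝ) (a : ℕ → ℝ) : ℝ≥0∞ :=
  ∑' i, ENNReal.ofReal ((1 + τ) ^ i * c (a i))

/-- A sequence is a feasible allocation of a mass `x` of tasks if it is nonnegative and
sums to `x`. -/
def Feasible (x : ℝ) (a : ℕ → ℝ) : Prop :=
  (∀ i, 0 ≤ a i) ∧ HasSum a x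

/-- The value function `W(x) = min { ∑_{i=0}^∞ (1+τ)^i c(a_i) : a feasible for x }`. -/
noncomputable def valueFun (τ : ℝ) (c : ℝ → ℝ) (x : ℝ) : ℝ :=
  (⨅ (a : ℕ → ℝ) (_ : Feasible x a), totalCost τ c a).toReal

noncomputable def Winf (τ : ℝ) (c : ℝ → ℝ) (x : ℝ) : ℝ≥0∞ :=
  ⨅ (a : ℕ → ℝ) (_ : Feasible x a), totalCost τ c a

lemma valueFun_eq (τ : ℝ) (c : ℝ → ℝ) (x : ℝ) : valueFun τ c x = (Winf τ c x).toReal := rfl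

lemma totalCost_shift {τ : ℝ} (hτ : 0 ≤ 1 + τ) (c : ℝ → ℝ) (f : ℕ → ℝ) :
    totalCost τ c f
      = ENNReal.ofReal (c (f 0)) + ENNReal.ofReal (1 + τ) * totalCost τ c (fun j => f (j + 1)) := by
  unfold totalCost
  rw [tsum_eq_zero_add' ENNReal.summable]
  simp only [pow_zero, one_mul]
  congr 1
  rw [← ENNReal.tsum_mul_left]
  refine tsum_congr fun i => ?_
  rw [← ENNReal.ofReal_mul hτ]
  congr 1
  ring

lemma totalCost_split {τ : ℝ} (hτ : 0 ≤ 1 + τ) (c : ℝ → ℝ) (f : ℕ → ℝ) (k : ℕ) :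
    totalCost τ c f
      = (∑ i ∈ Finset.range k, ENNReal.ofReal ((1 + τ) ^ i * c (f i)))
        + ENNReal.ofReal ((1 + τ) ^ k) * totalCost τ c (fun j => f (k + j)) := by
  induction k with
  | zero => simp
  | succ k ih =>
      have hsh := totalCost_shift hτ c (fun j => f (k + j))
      have h1 : (fun j => f (k + (j + 1))) = fun j => f (k + 1 + j) := by
        funext j; congr 1; omega
      rw [h1, Nat.add_zero] at hsh
      rw [ih, hsh, Finset.sum_range_succ, mul_add, ← ENNReal.ofReal_mul (pow_nonneg hτ k),
        ← mul_assoc, ← ENNReal.ofReal_mul (pow_nonneg hτ k), ← pow_succ, add_assoc]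

lemma single_feasible {x : ℝ} (hx : 0 ≤ x) : Feasible x (fun i => if i = 0 then x else 0) :=
  ⟨fun i => by dsimp only; split <;> simp [hx], by simpa using hasSum_ite_eq 0 x⟩

lemma totalCost_single {τ : ℝ} (hτ : 0 ≤ 1 + τ) {c : ℝ → ℝ} (hzero : c 0 = 0) (x : ℝ) :
    totalCost τ c (fun i => if i = 0 then x else 0) = ENNReal.ofReal (c x) := by
  have h := totalCost_shift hτ c (fun i => if i = 0 then x else 0)
  simp only [if_true, eq_self_iff_true] at h
  rw [h]
  have : totalCost τ c (fun j => if j + 1 = 0 then x else 0) = 0 := by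
    unfold totalCost
    simp [hzero]
  rw [this, mul_zero, add_zero]

lemma Winf_le_ofReal {τ : ℝ} (hτ : 0 ≤ 1 + τ) {c : ℝ → ℝ} (hzero : c 0 = 0) {x : ℝ}
    (hx : 0 ≤ x) : Winf τ c x ≤ ENNReal.ofReal (c x) :=
  (iInf₂_le _ (single_feasible hx)).trans_eq (totalCost_single hτ hzero x)

lemma Winf_ne_top {τ : ℝ} (hτ : 0 ≤ 1 + τ) {c : ℝ → ℝ} (hzero : c 0 = 0) {x : ℝ}
    (hx : 0 ≤ x) : Winf τ c x ≠ ⊤ :=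
  ne_top_of_le_ne_top ENNReal.ofReal_ne_top (Winf_le_ofReal hτ hzero hx)

/-- if the price function is `p = W` and the task allocation is
`v_i = a_i*` (the unique solution of the negative discount dynamic program with `ℓ = c`,
`β = 1 + τ`, `x̂ = 1`), then `(p, {v_i})` is an equilibrium for the production chain. -/
theorem dynamic_program_solution_is_production_chain_equilibrium
    (c cd : ℝ → ℝ)
    (hderiv : ∀ x ∈ Set.Icc (0 : ℝ) 1, HasDerivAt c (cd x) x)
    (hcont_deriv : ContinuousOn cd (Set.Icc (0 : ℝ) 1))
    (hmono : MonotoneOn c (Set.Icc (0 : ℝ) 1))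
    (hconv : StrictConvexOn ℝ (Set.Icc (0 : ℝ) 1) c)
    (hzero : c 0 = 0)
    (τ : ℝ) (hτ : 0 < τ)
    (astar : ℕ → ℝ)
    (hfeas : Feasible 1 astar)
    (hmin : ∀ a : ℕ → ℝ, Feasible 1 a → totalCost τ c astar ≤ totalCost τ c a)
    (b : ℕ → ℝ) (hb0 : b 0 = 1) (hbrec : ∀ i, b (i + 1) = b i - astar i) :
    valueFun τ c 0 = 0 ∧
    (∀ t s : ℝ, 0 ≤ t → t ≤ s → s ≤ 1 →
      valueFun τ c s - c (s - t) - (1 + τ) * valueFun τ c t ≤ 0) ∧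
    (∀ i : ℕ,
      valueFun τ c (b i) - c (astar i) - (1 + τ) * valueFun τ c (b (i + 1)) = 0) := by
  have h0 : (0:ℝ) ≤ 1 + τ := by linarith
  have h1p : (0:ℝ) < 1 + τ := by linarith
  have h0mem : (0:ℝ) ∈ Set.Icc (0:ℝ) 1 := ⟨le_refl _, zero_le_one⟩
  have cnonneg : ∀ y ∈ Set.Icc (0:ℝ) 1, 0 ≤ c y := fun y hy => by
    have := hmono h0mem hy hy.1
    linarith [hzero ▸ this]
  -- Part 1
  have part1 : valueFun τ c 0 = 0 := by
    have : Winf τ c 0 = 0 := le_antisymm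
      (by simpa [hzero] using Winf_le_ofReal h0 hzero (le_refl (0:ℝ))) zero_le
    rw [valueFun_eq, this, ENNReal.toReal_zero]
  -- Part 2
  have part2 : ∀ t s : ℝ, 0 ≤ t → t ≤ s → s ≤ 1 →
      valueFun τ c s - c (s - t) - (1 + τ) * valueFun τ c t ≤ 0 := by
    intro t s ht hts hs1
    have hst : 0 ≤ s - t := sub_nonneg.2 hts
    have hstI : s - t ∈ Set.Icc (0:ℝ) 1 := ⟨hst, by linarith⟩
    have hWt_ne : Winf τ c t ≠ ⊤ := Winf_ne_top h0 hzero ht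
    have key : ∀ ε : ℝ, 0 < ε →
        valueFun τ c s ≤ c (s - t) + (1 + τ) * (valueFun τ c t + ε) := by
      intro ε hε
      have hlt : Winf τ c t < Winf τ c t + ENNReal.ofReal ε :=
        ENNReal.lt_add_right hWt_ne (by simp [ENNReal.ofReal_pos.2 hε |>.ne'])
      rw [Winf, iInf_lt_iff] at hlt
      obtain ⟨a, hlt⟩ := hlt
      rw [iInf_lt_iff] at hlt
      obtain ⟨ha, hlt⟩ := hlt
      -- the shifted allocation
      set a' : ℕ → ℝ := fun n => Nat.casesOn n (s - t) (fun m => a m) with ha'def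
      have ha'feas : Feasible s a' := by
        refine ⟨fun i => ?_, ?_⟩
        · cases i with
          | zero => exact hst
          | succ m => exact ha.1 m
        · have h2 : HasSum (fun n => a' (n + 1)) t := ha.2
          have h3 := (hasSum_nat_add_iff (f := a') 1).1 h2
          simpa [Finset.sum_range_one, ha'def] using h3
      have hW : Winf τ c s ≤ totalCost τ c a' := iInf₂_le _ ha'feas
      have hcost : totalCost τ c a'
          = ENNReal.ofReal (c (s - t)) + ENNReal.ofReal (1 + τ) * totalCost τ c a := by
        have h := totalCost_shift h0 c a'
        simpa [ha'def] using h
      have hle2 : Winf τ c s ≤ ENNReal.ofReal (c (s - t))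
          + ENNReal.ofReal (1 + τ) * (Winf τ c t + ENNReal.ofReal ε) := by
        refine hW.trans ?_
        rw [hcost]
        exact add_le_add_right (mul_le_mul_right hlt.le _) _
      have hRne : (ENNReal.ofReal (c (s - t))
          + ENNReal.ofReal (1 + τ) * (Winf τ c t + ENNReal.ofReal ε)) ≠ ⊤ := by
        refine ENNReal.add_ne_top.2 ⟨ENNReal.ofReal_ne_top, ENNReal.mul_ne_top
          ENNReal.ofReal_ne_top (ENNReal.add_ne_top.2 ⟨hWt_ne, ENNReal.ofReal_ne_top⟩)⟩
      have := ENNReal.toReal_mono hRne hle2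
      rw [valueFun_eq]
      refine this.trans_eq ?_
      rw [ENNReal.toReal_add ENNReal.ofReal_ne_top (ENNReal.mul_ne_top
          ENNReal.ofReal_ne_top (ENNReal.add_ne_top.2 ⟨hWt_ne, ENNReal.ofReal_ne_top⟩)),
        ENNReal.toReal_mul, ENNReal.toReal_ofReal (cnonneg _ hstI),
        ENNReal.toReal_ofReal h0,
        ENNReal.toReal_add hWt_ne ENNReal.ofReal_ne_top,
        ENNReal.toReal_ofReal hε.le, valueFun_eq]
    have hfin : valueFun τ c s ≤ c (s - t) + (1 + τ) * valueFun τ c t := by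
      refine le_of_forall_pos_le_add fun ε hε => ?_
      have := key (ε / (1 + τ)) (div_pos hε h1p)
      have heq : c (s - t) + (1 + τ) * (valueFun τ c t + ε / (1 + τ))
          = c (s - t) + (1 + τ) * valueFun τ c t + ε := by
        field_simp
        ring
      linarith [heq ▸ this]
    linarith
  -- Part 3
  have hbsum : ∀ k, b k = 1 - ∑ i ∈ Finset.range k, astar i := by
    intro k
    induction k with
    | zero => simpa using hb0
    | succ k ih => rw [hbrec k, ih, Finset.sum_range_succ]; ring
  have htail : ∀ k, HasSum (fun n => astar (n + k)) (b k) := by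
    intro k
    refine (hasSum_nat_add_iff (f := astar) k).2 ?_
    have : b k + ∑ i ∈ Finset.range k, astar i = 1 := by rw [hbsum k]; ring
    rw [this]; exact hfeas.2
  have htail' : ∀ k, HasSum (fun j => astar (k + j)) (b k) := by
    intro k
    have heq : (fun j => astar (k + j)) = fun n => astar (n + k) := by
      funext j; rw [add_comm]
    rw [heq]; exact htail k
  have tailFeas : ∀ k, Feasible (b k) (fun j => astar (k + j)) :=
    fun k => ⟨fun j => hfeas.1 _, htail' k⟩
  have hbk0 : ∀ k, 0 ≤ b k := fun k =>
    hasSum_le (fun i => hfeas.1 _) hasSum_zero (htail k)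
  have astar_mem : ∀ k, astar k ∈ Set.Icc (0:ℝ) 1 := fun k =>
    ⟨hfeas.1 k, le_hasSum hfeas.2 k (fun j _ => hfeas.1 j)⟩
  have Wtail : ∀ k, Winf τ c (b k) = totalCost τ c (fun j => astar (k + j)) := by
    intro k
    refine le_antisymm (iInf₂_le _ (tailFeas k)) (le_iInf₂ fun a ha => ?_)
    set a' : ℕ → ℝ := fun i => if i < k then astar i else a (i - k) with ha'def
    have hsplice_tail : (fun n => a' (n + k)) = a := by
      funext n
      have h1 : ¬ (n + k < k) := by omega
      simp [ha'def, h1]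
    have ha'feas : Feasible 1 a' := by
      refine ⟨fun i => ?_, ?_⟩
      · by_cases hi : i < k <;> simp [ha'def, hi, hfeas.1 i, ha.1 (i - k)]
      · have h2 : HasSum (fun n => a' (n + k)) (b k) := by rw [hsplice_tail]; exact ha.2
        have h3 := (hasSum_nat_add_iff (f := a') k).1 h2
        have h4 : ∑ i ∈ Finset.range k, a' i = ∑ i ∈ Finset.range k, astar i :=
          Finset.sum_congr rfl fun i hi => if_pos (Finset.mem_range.1 hi)
        have h5 : b k + ∑ i ∈ Finset.range k, a' i = 1 := by
          rw [h4, hbsum k]; ring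
        rwa [h5] at h3
    have hmin' := hmin a' ha'feas
    rw [totalCost_split h0 c astar k, totalCost_split h0 c a' k] at hmin'
    have hhead : ∑ i ∈ Finset.range k, ENNReal.ofReal ((1 + τ) ^ i * c (a' i))
        = ∑ i ∈ Finset.range k, ENNReal.ofReal ((1 + τ) ^ i * c (astar i)) := by
      refine Finset.sum_congr rfl fun i hi => ?_
      rw [ha'def]; simp [Finset.mem_range.1 hi]
    rw [hhead] at hmin'
    have hheadne : (∑ i ∈ Finset.range k, ENNReal.ofReal ((1 + τ) ^ i * c (astar i))) ≠ ⊤ :=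
      (ENNReal.sum_lt_top.2 fun i _ => ENNReal.ofReal_lt_top).ne
    have hmul := (ENNReal.add_le_add_iff_left hheadne).1 hmin'
    have hP0 : ENNReal.ofReal ((1 + τ) ^ k) ≠ 0 :=
      (ENNReal.ofReal_pos.2 (pow_pos h1p k)).ne'
    have := (ENNReal.mul_le_mul_iff_right hP0 ENNReal.ofReal_ne_top).1 hmul
    have htaileq : (fun j => a' (k + j)) = a := by
      funext j
      have h1 : ¬ (k + j < k) := by omega
      have h2 : k + j - k = j := by omega
      simp [ha'def, h1, h2]
    rwa [htaileq] at this
  have Wne : ∀ k, Winf τ c (b k) ≠ ⊤ := fun k => Winf_ne_top h0 hzero (hbk0 k)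
  refine ⟨part1, part2, fun k => ?_⟩
  have hsh := totalCost_shift h0 c (fun j => astar (k + j))
  have hidx : (fun j => astar (k + (j + 1))) = fun j => astar (k + 1 + j) := by
    funext j; congr 1; omega
  rw [hidx, Nat.add_zero] at hsh
  have hbell : Winf τ c (b k)
      = ENNReal.ofReal (c (astar k)) + ENNReal.ofReal (1 + τ) * Winf τ c (b (k + 1)) := by
    rw [Wtail k, Wtail (k + 1), hsh]
  have hmulne : ENNReal.ofReal (1 + τ) * Winf τ c (b (k + 1)) ≠ ⊤ :=
    ENNReal.mul_ne_top ENNReal.ofReal_ne_top (Wne (k + 1))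
  have : valueFun τ c (b k) = c (astar k) + (1 + τ) * valueFun τ c (b (k + 1)) := by
    rw [valueFun_eq, hbell, ENNReal.toReal_add ENNReal.ofReal_ne_top hmulne,
      ENNReal.toReal_mul, ENNReal.toReal_ofReal (cnonneg _ (astar_mem k)),
      ENNReal.toReal_ofReal h0, valueFun_eq]
  linarith
end

section
/- Let c(v) = κ·v^{1/η} with κ > 0 and 0 < η < 1, let τ > 0, and set θ := (1+τ)^{η/(η−1)}, so 0 < θ < 1. Then the unique minimizer of ∑_{i=0}^∞ (1+τ)^i c(a_i) over nonnegative sequences with ∑_{i=0}^∞ a_i = 1 is a_i* = θ^i (1 − θ), and the value function satisfies W(x) = κ·(1 − θ)^{(1−η)/η}·x^{1/η} for all x ∈ [0, 1]. -/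
open Set Filter ENNReal Real

lemma grad_lt {p s t : ℝ} (hp : 1 < p) (hs : 0 ≤ s) (ht : 0 < t) (hne : s ≠ t) :
    t ^ p + p * t ^ (p - 1) * (s - t) < s ^ p := by
  have hu : (-1 : ℝ) ≤ s / t - 1 := by
    have : 0 ≤ s / t := div_nonneg hs ht.le
    linarith
  have hu' : s / t - 1 ≠ 0 := by
    intro h
    have h1 : s / t = 1 := by linarith
    exact hne ((div_eq_one_iff_eq ht.ne').mp h1)
  have hb := one_add_mul_self_lt_rpow_one_add hu hu' hp
  have hst : (1 : ℝ) + (s / t - 1) = s / t := by ring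
  rw [hst] at hb
  have htp : (0:ℝ) < t ^ p := Real.rpow_pos_of_pos ht p
  have h2 : (1 + p * (s / t - 1)) * t ^ p < (s / t) ^ p * t ^ p :=
    mul_lt_mul_of_pos_right hb htp
  have h3 : (s / t) ^ p * t ^ p = s ^ p := by
    rw [← Real.mul_rpow (div_nonneg hs ht.le) ht.le, div_mul_cancel₀ _ ht.ne']
  have h4 : (1 + p * (s / t - 1)) * t ^ p = t ^ p + p * t ^ (p - 1) * (s - t) := by
    rw [Real.rpow_sub_one ht.ne']
    field_simp
  rw [h4, h3] at h2
  exact h2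

lemma grad_le {p s t : ℝ} (hp : 1 < p) (hs : 0 ≤ s) (ht : 0 < t) :
    t ^ p + p * t ^ (p - 1) * (s - t) ≤ s ^ p := by
  rcases eq_or_ne s t with rfl | hne
  · simp
  · exact (grad_lt hp hs ht hne).le

/-- closed-form solution with `c(v) = κ·v^{1/η}`: with
`θ = (1+τ)^{η/(η−1)} ∈ (0,1)`, the unique minimizer is `a_i* = θ^i (1 − θ)` and
`W(x) = κ (1 − θ)^{(1−η)/η} x^{1/η}` on `[0, 1]`. -/
theorem closed_form_solution_cobb_douglas
    (κ : ℝ) (hκ : 0 < κ)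
    (η : ℝ) (hη0 : 0 < η) (hη1 : η < 1)
    (τ : ℝ) (hτ : 0 < τ)
    (c : ℝ → ℝ) (hc : ∀ v : ℝ, c v = κ * v ^ (1 / η))
    (θ : ℝ) (hθ : θ = (1 + τ) ^ (η / (η - 1)))
    (astar : ℕ → ℝ) (hastar : ∀ i, astar i = θ ^ i * (1 - θ)) :
    (0 < θ ∧ θ < 1) ∧
    Feasible 1 astar ∧
    (∀ a : ℕ → ℝ, Feasible 1 a → totalCost τ c astar ≤ totalCost τ c a) ∧
    (∀ a : ℕ → ℝ, Feasible 1 a → totalCost τ c a = totalCost τ c astar → a = astar) ∧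
    (∀ x ∈ Set.Icc (0 : ℝ) 1,
      valueFun τ c x = κ * (1 - θ) ^ ((1 - η) / η) * x ^ (1 / η)) := by
  have hβ0 : (0:ℝ) < 1 + τ := by linarith
  have hβ1 : (1:ℝ) < 1 + τ := by linarith
  have hη : η ≠ 0 := ne_of_gt hη0
  have hη1' : η - 1 ≠ 0 := sub_ne_zero.mpr (ne_of_lt hη1)
  have hp1 : 1 < 1/η := by rw [lt_div_iff₀ hη0]; linarith
  have hθ0 : 0 < θ := hθ ▸ Real.rpow_pos_of_pos hβ0 _
  have hθlt : θ < 1 := by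
    rw [hθ]
    exact Real.rpow_lt_one_of_one_lt_of_neg hβ1 (div_neg_of_pos_of_neg hη0 (by linarith))
  have h1θ : 0 < 1 - θ := by linarith
  -- key exponent identities
  have hkey1 : (1 + τ) * θ ^ (1/η - 1) = 1 := by
    have h : (1+τ) * θ ^ (1/η - 1) = (1+τ)^(1:ℝ) * (1+τ)^(η/(η-1)*(1/η-1)) := by
      rw [Real.rpow_one, hθ, ← Real.rpow_mul hβ0.le]
    rw [h, ← Real.rpow_add hβ0,
      show (1:ℝ) + η/(η-1)*(1/η-1) = 0 by field_simp; ring, Real.rpow_zero]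
  have hkey2 : (1 + τ) * θ ^ (1/η : ℝ) = θ := by
    have h : (1+τ) * θ ^ (1/η : ℝ) = (1+τ)^(1:ℝ) * (1+τ)^(η/(η-1)*(1/η)) := by
      rw [Real.rpow_one, hθ, ← Real.rpow_mul hβ0.le]
    rw [h, ← Real.rpow_add hβ0,
      show (1:ℝ) + η/(η-1)*(1/η) = η/(η-1) by field_simp; ring, ← hθ]
  have hpowswap : ∀ (e : ℝ) (i : ℕ), ((θ ^ i : ℝ)) ^ e = (θ ^ e) ^ i := by
    intro e i
    rw [← Real.rpow_natCast θ i, ← Real.rpow_mul hθ0.le, mul_comm,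
      Real.rpow_mul hθ0.le, Real.rpow_natCast]
  -- coefficient identity
  have hcoef : ∀ x : ℝ, 0 ≤ x → ∀ i : ℕ,
      (1+τ)^i * (θ^i * ((1-θ)*x)) ^ (1/η - 1) = ((1-θ)*x) ^ (1/η - 1) := by
    intro x hx i
    rw [Real.mul_rpow (pow_nonneg hθ0.le i) (mul_nonneg h1θ.le hx), hpowswap _ i,
      ← mul_assoc, ← mul_pow, hkey1, one_pow, one_mul]
  -- cost term of the candidate allocation
  have hterm : ∀ x : ℝ, 0 ≤ x → ∀ i : ℕ,
      (1+τ)^i * c (θ^i * ((1-θ)*x)) = κ * ((1-θ)*x)^(1/η : ℝ) * θ^i := by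
    intro x hx i
    rw [hc, Real.mul_rpow (pow_nonneg hθ0.le i) (mul_nonneg h1θ.le hx), hpowswap _ i]
    calc (1+τ)^i * (κ * ((θ^(1/η:ℝ))^i * ((1-θ)*x)^(1/η:ℝ)))
        = κ * ((1-θ)*x)^(1/η:ℝ) * ((1+τ) * θ^(1/η:ℝ))^i := by rw [mul_pow]; ring
      _ = κ * ((1-θ)*x)^(1/η:ℝ) * θ^i := by rw [hkey2]
  -- feasibility of the candidate allocation
  have hfeas : ∀ x : ℝ, 0 ≤ x → Feasible x (fun i => θ^i * ((1-θ)*x)) := by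
    intro x hx
    refine ⟨fun i => mul_nonneg (pow_nonneg hθ0.le i) (mul_nonneg h1θ.le hx), ?_⟩
    have h := (hasSum_geometric_of_lt_one hθ0.le hθlt).mul_right ((1-θ)*x)
    rwa [← mul_assoc, inv_mul_cancel₀ (ne_of_gt h1θ), one_mul] at h
  -- cost of the candidate allocation
  have hcost : ∀ x : ℝ, 0 ≤ x →
      totalCost τ c (fun i => θ^i * ((1-θ)*x))
        = ENNReal.ofReal (κ * (1-θ)^(1/η - 1) * x^(1/η : ℝ)) := by
    intro x hx
    unfold totalCost
    have h1 : ∀ i : ℕ, ENNReal.ofReal ((1+τ)^i * c (θ^i * ((1-θ)*x)))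
        = ENNReal.ofReal (κ * ((1-θ)*x)^(1/η:ℝ) * θ^i) := fun i => by rw [hterm x hx i]
    simp only [h1]
    rw [← ENNReal.ofReal_tsum_of_nonneg
      (fun i => mul_nonneg (mul_nonneg hκ.le (Real.rpow_nonneg (mul_nonneg h1θ.le hx) _))
        (pow_nonneg hθ0.le i))
      ((summable_geometric_of_lt_one hθ0.le hθlt).mul_left _)]
    congr 1
    rw [tsum_mul_left, tsum_geometric_of_lt_one hθ0.le hθlt,
      Real.mul_rpow h1θ.le hx, Real.rpow_sub_one (ne_of_gt h1θ)]
    field_simp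
  -- pointwise inequalities
  have hpt_le : ∀ x : ℝ, 0 < x → ∀ (i : ℕ) (s : ℝ), 0 ≤ s →
      (1+τ)^i * c (θ^i*((1-θ)*x)) + (κ * (1/η) * ((1-θ)*x)^(1/η-1)) * s
        ≤ (1+τ)^i * c s + (κ * (1/η) * ((1-θ)*x)^(1/η-1)) * (θ^i*((1-θ)*x)) := by
    intro x hx i s hs
    have ht : 0 < θ^i*((1-θ)*x) := mul_pos (pow_pos hθ0 i) (mul_pos h1θ hx)
    have hgrad := grad_le (p := 1/η) (s := s) (t := θ^i*((1-θ)*x)) hp1 hs ht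
    rw [hc, hc]
    have hβκ : 0 < (1+τ)^i * κ := mul_pos (pow_pos hβ0 i) hκ
    have h1 := mul_le_mul_of_nonneg_left hgrad hβκ.le
    have h2 : (1+τ)^i*κ * ((θ^i*((1-θ)*x))^(1/η:ℝ)
          + (1/η)*(θ^i*((1-θ)*x))^(1/η-1)*(s - θ^i*((1-θ)*x)))
        = (1+τ)^i * (κ * (θ^i*((1-θ)*x))^(1/η:ℝ))
          + (κ * (1/η) * ((1-θ)*x)^(1/η-1)) * s
          - (κ * (1/η) * ((1-θ)*x)^(1/η-1)) * (θ^i*((1-θ)*x)) := by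
      rw [← hcoef x hx.le i]; ring
    rw [h2] at h1
    linarith
  have hpt_lt : ∀ x : ℝ, 0 < x → ∀ (i : ℕ) (s : ℝ), 0 ≤ s → s ≠ θ^i*((1-θ)*x) →
      (1+τ)^i * c (θ^i*((1-θ)*x)) + (κ * (1/η) * ((1-θ)*x)^(1/η-1)) * s
        < (1+τ)^i * c s + (κ * (1/η) * ((1-θ)*x)^(1/η-1)) * (θ^i*((1-θ)*x)) := by
    intro x hx i s hs hne
    have ht : 0 < θ^i*((1-θ)*x) := mul_pos (pow_pos hθ0 i) (mul_pos h1θ hx)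
    have hgrad := grad_lt (p := 1/η) (s := s) (t := θ^i*((1-θ)*x)) hp1 hs ht hne
    rw [hc, hc]
    have hβκ : 0 < (1+τ)^i * κ := mul_pos (pow_pos hβ0 i) hκ
    have h1 := mul_lt_mul_of_pos_left hgrad hβκ
    have h2 : (1+τ)^i*κ * ((θ^i*((1-θ)*x))^(1/η:ℝ)
          + (1/η)*(θ^i*((1-θ)*x))^(1/η-1)*(s - θ^i*((1-θ)*x)))
        = (1+τ)^i * (κ * (θ^i*((1-θ)*x))^(1/η:ℝ))
          + (κ * (1/η) * ((1-θ)*x)^(1/η-1)) * s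
          - (κ * (1/η) * ((1-θ)*x)^(1/η-1)) * (θ^i*((1-θ)*x)) := by
      rw [← hcoef x hx.le i]; ring
    rw [h2] at h1
    linarith
  -- nonnegativity facts
  have hK : ∀ x : ℝ, 0 ≤ x → 0 ≤ κ * (1/η) * ((1-θ)*x)^(1/η-1) := fun x hx =>
    mul_nonneg (mul_nonneg hκ.le (by positivity))
      (Real.rpow_nonneg (mul_nonneg h1θ.le hx) _)
  have hcnn : ∀ s : ℝ, 0 ≤ s → ∀ i : ℕ, 0 ≤ (1+τ)^i * c s := fun s hs i => by
    rw [hc]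
    exact mul_nonneg (pow_nonneg hβ0.le i) (mul_nonneg hκ.le (Real.rpow_nonneg hs _))
  -- shifted sum computation
  have hsum_shift : ∀ x : ℝ, 0 ≤ x → ∀ b d : ℕ → ℝ, (∀ i, 0 ≤ b i) →
      HasSum d x → (∀ i, 0 ≤ d i) →
      ∑' i, ENNReal.ofReal ((1+τ)^i * c (b i) + (κ * (1/η) * ((1-θ)*x)^(1/η-1)) * d i)
        = totalCost τ c b + ENNReal.ofReal ((κ * (1/η) * ((1-θ)*x)^(1/η-1)) * x) := by
    intro x hx b d hb hd hd0
    have h1 : ∀ i, ENNReal.ofReal ((1+τ)^i * c (b i) + (κ * (1/η) * ((1-θ)*x)^(1/η-1)) * d i)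
        = ENNReal.ofReal ((1+τ)^i * c (b i))
          + ENNReal.ofReal ((κ * (1/η) * ((1-θ)*x)^(1/η-1)) * d i) := fun i =>
      ENNReal.ofReal_add (hcnn _ (hb i) i) (mul_nonneg (hK x hx) (hd0 i))
    simp only [h1]
    rw [ENNReal.tsum_add]
    congr 1
    rw [← ENNReal.ofReal_tsum_of_nonneg (fun i => mul_nonneg (hK x hx) (hd0 i))
      (hd.summable.mul_left _)]
    congr 1
    exact (hd.mul_left _).tsum_eq
  -- main lower bound
  have main_le : ∀ x : ℝ, 0 < x → ∀ a, Feasible x a →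
      ENNReal.ofReal (κ * (1-θ)^(1/η - 1) * x^(1/η : ℝ)) ≤ totalCost τ c a := by
    intro x hx a ha
    have hle : ∀ i, ENNReal.ofReal ((1+τ)^i * c (θ^i*((1-θ)*x))
          + (κ * (1/η) * ((1-θ)*x)^(1/η-1)) * a i)
        ≤ ENNReal.ofReal ((1+τ)^i * c (a i)
          + (κ * (1/η) * ((1-θ)*x)^(1/η-1)) * (θ^i*((1-θ)*x))) := fun i =>
      ENNReal.ofReal_le_ofReal (hpt_le x hx i (a i) (ha.1 i))
    have h := ENNReal.tsum_le_tsum hle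
    rw [hsum_shift x hx.le (fun i => θ^i*((1-θ)*x)) a (hfeas x hx.le).1 ha.2 ha.1,
      hsum_shift x hx.le a (fun i => θ^i*((1-θ)*x)) ha.1 (hfeas x hx.le).2 (hfeas x hx.le).1,
      hcost x hx.le] at h
    exact (ENNReal.add_le_add_iff_right ENNReal.ofReal_ne_top).mp h
  -- strict lower bound for non-candidate allocations (at x = 1)
  have main_lt : ∀ a, Feasible 1 a → a ≠ (fun i => θ^i*((1-θ)*1)) →
      ENNReal.ofReal (κ * (1-θ)^(1/η - 1) * (1:ℝ)^(1/η : ℝ)) < totalCost τ c a := by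
    intro a ha hne
    obtain ⟨j, hj⟩ : ∃ j, a j ≠ θ^j*((1-θ)*1) := by
      by_contra h
      push_neg at h
      exact hne (funext h)
    have hle : ∀ i, ENNReal.ofReal ((1+τ)^i * c (θ^i*((1-θ)*1))
          + (κ * (1/η) * ((1-θ)*1)^(1/η-1)) * a i)
        ≤ ENNReal.ofReal ((1+τ)^i * c (a i)
          + (κ * (1/η) * ((1-θ)*1)^(1/η-1)) * (θ^i*((1-θ)*1))) := fun i =>
      ENNReal.ofReal_le_ofReal (hpt_le 1 one_pos i (a i) (ha.1 i))
    have hjlt : ENNReal.ofReal ((1+τ)^j * c (θ^j*((1-θ)*1))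
          + (κ * (1/η) * ((1-θ)*1)^(1/η-1)) * a j)
        < ENNReal.ofReal ((1+τ)^j * c (a j)
          + (κ * (1/η) * ((1-θ)*1)^(1/η-1)) * (θ^j*((1-θ)*1))) := by
      rw [ENNReal.ofReal_lt_ofReal_iff_of_nonneg
        (add_nonneg (hcnn _ (mul_nonneg (pow_nonneg hθ0.le j)
          (mul_nonneg h1θ.le zero_le_one)) j) (mul_nonneg (hK 1 zero_le_one) (ha.1 j)))]
      exact hpt_lt 1 one_pos j (a j) (ha.1 j) hj
    have hfin : ∑' i, ENNReal.ofReal ((1+τ)^i * c (θ^i*((1-θ)*1))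
        + (κ * (1/η) * ((1-θ)*1)^(1/η-1)) * a i) ≠ ⊤ := by
      rw [hsum_shift 1 zero_le_one (fun i => θ^i*((1-θ)*1)) a (hfeas 1 zero_le_one).1 ha.2 ha.1,
        hcost 1 zero_le_one]
      exact (ENNReal.add_lt_top.mpr ⟨ENNReal.ofReal_lt_top, ENNReal.ofReal_lt_top⟩).ne
    have h := ENNReal.tsum_lt_tsum hfin hle hjlt
    rw [hsum_shift 1 zero_le_one (fun i => θ^i*((1-θ)*1)) a (hfeas 1 zero_le_one).1 ha.2 ha.1,
      hsum_shift 1 zero_le_one a (fun i => θ^i*((1-θ)*1)) ha.1 (hfeas 1 zero_le_one).2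
        (hfeas 1 zero_le_one).1,
      hcost 1 zero_le_one] at h
    exact (ENNReal.add_lt_add_iff_right ENNReal.ofReal_ne_top).mp h
  have hastar' : astar = fun i => θ^i * ((1-θ)*1) := funext fun i => by rw [hastar i, mul_one]
  refine ⟨⟨hθ0, hθlt⟩, ?_, ?_, ?_, ?_⟩
  · rw [hastar']; exact hfeas 1 zero_le_one
  · intro a ha
    rw [hastar', hcost 1 zero_le_one]
    exact main_le 1 one_pos a ha
  · intro a ha heq
    by_contra hne
    have hne' : a ≠ (fun i => θ^i*((1-θ)*1)) := by rw [← hastar']; exact hne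
    have h := main_lt a ha hne'
    rw [hastar', hcost 1 zero_le_one] at heq
    rw [heq] at h
    exact lt_irrefl _ h
  · intro x hx
    obtain ⟨hx0, _⟩ := hx
    unfold valueFun
    rcases eq_or_lt_of_le hx0 with h0 | h0
    · -- x = 0
      subst h0
      have hzero : Feasible 0 (fun _ => (0:ℝ)) := ⟨fun _ => le_refl 0, hasSum_zero⟩
      have hcost0 : totalCost τ c (fun _ => (0:ℝ)) = 0 := by
        unfold totalCost
        have hz : ∀ i : ℕ, (1+τ)^i * c 0 = 0 := fun i => by
          rw [hc, Real.zero_rpow (one_div_ne_zero hη)]; ring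
        simp [hz]
      have hinf0 : (⨅ (a : ℕ → ℝ) (_ : Feasible 0 a), totalCost τ c a) = 0 :=
        le_antisymm (le_trans (iInf₂_le _ hzero) (le_of_eq hcost0)) zero_le
      rw [hinf0, ENNReal.toReal_zero, Real.zero_rpow (one_div_ne_zero hη), mul_zero]
    · have hinf : (⨅ (a : ℕ → ℝ) (_ : Feasible x a), totalCost τ c a)
          = ENNReal.ofReal (κ * (1-θ)^(1/η - 1) * x^(1/η : ℝ)) := by
        apply le_antisymm
        · exact le_trans (iInf₂_le _ (hfeas x h0.le)) (le_of_eq (hcost x h0.le))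
        · exact le_iInf₂ fun a ha => main_le x h0 a ha
      rw [hinf, ENNReal.toReal_ofReal
        (mul_nonneg (mul_nonneg hκ.le (Real.rpow_nonneg h1θ.le _)) (Real.rpow_nonneg hx0 _))]
      rw [show (1-η)/η = 1/η - 1 by field_simp]
end
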